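/- Let λ = kD with k + h^∨ = p/u, p, u ∈ ℕ, gcd(p,u) = 1, gcd(u, ℓ) = 1. Then the set of affine coroots α^∨ + nK (α ∈ Δ, n ∈ ℤ) on which λ + ρ̂ takes integer values is exactly {α^∨ + nuK : α long} ∪ {α^∨ + nℓuK : α short} ∪ {nuK : n ≠ 0}, and the condition that (λ + ρ̂ | α^∨) ∈ ℕ for all such positive coroots is equivalent to p ≥ h^∨. -/

import Mathlib

private lemma aux16 (p u : ℕ) (hu : 0 < u) (hpu : Nat.Coprime p u) (n c : ℤ) :
    (∃ z : ℤ, (n : ℚ) * ((p : ℚ) / u) + (c : ℚ) = z) ↔ (u : ℤ) ∣ n := by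
  have huQ : (u : ℚ) ≠ 0 := by exact_mod_cast hu.ne'
  constructor
  · rintro ⟨z, hz⟩
    field_simp at hz
    have hz' : n * p + c * u = z * u := by
      have h : (n : ℚ) * p + c * u = z * u := by linarith [hz]
      exact_mod_cast h
    have hdvd : (u : ℤ) ∣ n * p := ⟨z - c, by linarith [hz']⟩
    have hcop : IsCoprime (u : ℤ) (p : ℤ) := by
      rw [Int.isCoprime_iff_gcd_eq_one]
      exact (Nat.coprime_comm.mp hpu)
    exact hcop.dvd_of_dvd_mul_right hdvd
  · rintro ⟨m, rfl⟩
    refine ⟨m * p + c, ?_⟩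
    push_cast
    field_simp

/-- Proposition 1.1, case (i), of Kac–Wakimoto, in an abstract form.  Data: a finite root
system `Δ` with a long/short classification `islong`, positivity `posR`, negation `negR`,
and integer pairing `r α = (ρ | α^∨)` satisfying the standard properties (`r θ = h^∨ - 1`
at the highest root `θ`, `|r α| ≤ h^∨ - 1`, `r α ≥ 1` for positive `α`).  The affine real
coroots are `α^∨ + nK` with `n ∈ ℤ` for `α` long and `n ∈ ℓℤ` for `α` short, and
`(λ + ρ̂ | α^∨ + nK) = n(k + h^∨) + (ρ|α^∨) = n·p/u + r α` for `λ = kD`, `k + h^∨ = p/u`.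
Then: (1) such a coroot takes an integer value iff `u ∣ n` (`α` long) or `ℓu ∣ n` (`α`
short); (2) an imaginary coroot `nK` (`n ≠ 0`) takes an integer value iff `u ∣ n`;
(3) the condition `(λ + ρ̂ | α^∨) ∈ ℕ` for all positive coroots in this set is equivalent
to `p ≥ h^∨`. -/
theorem stmt16 {Δ : Type*} (islong : Δ → Prop) (posR : Δ → Prop) (negR : Δ → Δ)
    (r : Δ → ℤ) (hneg_r : ∀ α, r (negR α) = -r α)
    (hneg_long : ∀ α, islong (negR α) ↔ islong α)
    (hneg_pos : ∀ α, posR α ↔ ¬ posR (negR α))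
    (hv ℓ p u : ℕ) (hh : 2 ≤ hv) (hℓ : 0 < ℓ) (hp : 0 < p) (hu : 0 < u)
    (hpu : Nat.Coprime p u) (huℓ : Nat.Coprime u ℓ)
    (hrb : ∀ α, r α ≤ (hv : ℤ) - 1) (hrb' : ∀ α, -((hv : ℤ) - 1) ≤ r α)
    (hrpos : ∀ α, posR α → 1 ≤ r α)
    (θ : Δ) (hθlong : islong θ) (hθpos : posR θ) (hθr : r θ = (hv : ℤ) - 1)
    (k : ℚ) (hk : k + (hv : ℚ) = (p : ℚ) / u) :
    (∀ α : Δ, ∀ n : ℤ, (islong α ∨ (ℓ : ℤ) ∣ n) →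
        ((∃ z : ℤ, (n : ℚ) * ((p : ℚ) / u) + (r α : ℚ) = z) ↔
          ((islong α ∧ (u : ℤ) ∣ n) ∨ (¬ islong α ∧ ((ℓ * u : ℕ) : ℤ) ∣ n))))
    ∧ (∀ n : ℤ, n ≠ 0 → ((∃ z : ℤ, (n : ℚ) * ((p : ℚ) / u) = z) ↔ (u : ℤ) ∣ n))
    ∧ ((∀ α : Δ, ∀ n : ℤ, (islong α ∨ (ℓ : ℤ) ∣ n) →
          (0 < n ∨ (n = 0 ∧ posR α)) →
          (∃ z : ℤ, (n : ℚ) * ((p : ℚ) / u) + (r α : ℚ) = z) →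
          1 ≤ (n : ℚ) * ((p : ℚ) / u) + (r α : ℚ))
        ↔ hv ≤ p) := by
  have huQ : (u : ℚ) ≠ 0 := by exact_mod_cast hu.ne'
  refine ⟨?_, ?_, ?_⟩
  · intro α n hmem
    rw [aux16 p u hu hpu n (r α)]
    constructor
    · intro hun
      by_cases hl : islong α
      · exact Or.inl ⟨hl, hun⟩
      · refine Or.inr ⟨hl, ?_⟩
        have hℓn : (ℓ : ℤ) ∣ n := hmem.resolve_left hl
        have hcop : IsCoprime (ℓ : ℤ) (u : ℤ) := by
          rw [Int.isCoprime_iff_gcd_eq_one]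
          exact (Nat.coprime_comm.mp huℓ)
        have := hcop.mul_dvd hℓn hun
        simpa using this
    · rintro (⟨_, hun⟩ | ⟨_, hun⟩)
      · exact hun
      · exact dvd_trans (by push_cast; exact Dvd.intro_left _ rfl) hun
  · intro n hn
    have := aux16 p u hu hpu n 0
    simpa using this
  · constructor
    · -- forward: the positivity condition implies hv ≤ p
      intro hP
      by_contra hlt
      push_neg at hlt
      have h1 := hP (negR θ) (u : ℤ) (Or.inl ((hneg_long θ).mpr hθlong))
        (Or.inl (by exact_mod_cast hu))
        ((aux16 p u hu hpu (u : ℤ) (r (negR θ))).mpr dvd_rfl)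
      have hval : ((u : ℤ) : ℚ) * ((p : ℚ) / u) + (r (negR θ) : ℚ)
          = (p : ℚ) - ((hv : ℚ) - 1) := by
        rw [hneg_r, hθr]
        push_cast
        field_simp
        ring
      rw [hval] at h1
      have : (p : ℚ) < (hv : ℚ) := by exact_mod_cast hlt
      linarith
    · -- backward: hv ≤ p implies the positivity condition
      intro hle α n hmem hpos hint
      have hun : (u : ℤ) ∣ n := (aux16 p u hu hpu n (r α)).mp hint
      rcases hpos with hn | ⟨hn0, hαpos⟩
      · have hun' : (u : ℤ) ≤ n := Int.le_of_dvd hn hun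
        have h1 : ((u : ℤ) : ℚ) ≤ (n : ℚ) := by exact_mod_cast hun'
        have h2 : (0 : ℚ) ≤ (p : ℚ) / u := by positivity
        have h3 : ((u : ℤ) : ℚ) * ((p : ℚ) / u) ≤ (n : ℚ) * ((p : ℚ) / u) :=
          mul_le_mul_of_nonneg_right h1 h2
        have h4 : ((u : ℤ) : ℚ) * ((p : ℚ) / u) = (p : ℚ) := by
          push_cast; field_simp
        have h5 : -((hv : ℚ) - 1) ≤ (r α : ℚ) := by exact_mod_cast hrb' α
        have h6 : (hv : ℚ) ≤ (p : ℚ) := by exact_mod_cast hle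
        linarith
      · subst hn0
        have := hrpos α hαpos
        have : (1 : ℚ) ≤ (r α : ℚ) := by exact_mod_cast this
        simpa using this
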